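/- Let g be a real Lie algebra with an integrable almost-complex structure J (satisfying the Nijenhuis condition [JX,JY] = [X,Y] + J[JX,Y] + J[X,JY]). For each i, the subspace g^i(J) = g^i + J(g^i), where g^i is the i-th term of the descending central series, is a Lie subalgebra of g. -/
import Mathlib


/-- If `J` is an integrable almost-complex structure on a real Lie
algebra `g`, then for every `i` the subspace `g^i + J(g^i)` (where `g^i` is the
`i`-th term of the descending central series) is a Lie subalgebra of `g`. -/
theorem stmt3 {g : Type*} [LieRing g] [LieAlgebra ℝ g] (J : g →ₗ[ℝ] g)
    (hJ2 : ∀ X : g, J (J X) = -X)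
    (hint : ∀ X Y : g, ⁅J X, J Y⁆ = ⁅X, Y⁆ + J ⁅J X, Y⁆ + J ⁅X, J Y⁆) (i : ℕ) :
    ∃ h : LieSubalgebra ℝ g, h.toSubmodule =
      ((LieModule.lowerCentralSeries ℝ g g i : LieSubmodule ℝ g g) : Submodule ℝ g) ⊔
        Submodule.map J
          ((LieModule.lowerCentralSeries ℝ g g i : LieSubmodule ℝ g g) : Submodule ℝ g) := by
  set N := LieModule.lowerCentralSeries ℝ g g i with hN
  set V : Submodule ℝ g := (N : Submodule ℝ g) with hVdef
  have hVl : ∀ (z : g) {v : g}, v ∈ V → ⁅z, v⁆ ∈ V := fun z v hv => N.lie_mem hv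
  have hVr : ∀ (z : g) {v : g}, v ∈ V → ⁅v, z⁆ ∈ V := by
    intro z v hv
    have : ⁅v, z⁆ = -⁅z, v⁆ := (lie_skew v z).symm
    rw [this]
    exact V.neg_mem (hVl z hv)
  refine ⟨{ toSubmodule := V ⊔ V.map J, lie_mem' := ?_ }, rfl⟩
  intro x y hx hy
  have hx' : x ∈ V ⊔ V.map J := hx
  have hy' : y ∈ V ⊔ V.map J := hy
  rw [Submodule.mem_sup] at hx' hy'
  obtain ⟨a, ha, ja, hja, rfl⟩ := hx'
  obtain ⟨b, hb, jb, hjb, rfl⟩ := hy'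
  obtain ⟨a', ha', rfl⟩ := hja
  obtain ⟨b', hb', rfl⟩ := hjb
  show ⁅a + J a', b + J b'⁆ ∈ V ⊔ V.map J
  have key : ⁅a + J a', b + J b'⁆ =
      (⁅a, b⁆ + ⁅a, J b'⁆ + ⁅J a', b⁆ + ⁅a', b'⁆) + (J ⁅J a', b'⁆ + J ⁅a', J b'⁆) := by
    rw [add_lie, lie_add, lie_add, hint a' b']
    abel
  rw [key]
  refine Submodule.add_mem _ (Submodule.mem_sup_left ?_) (Submodule.mem_sup_right ?_)
  · exact V.add_mem (V.add_mem (V.add_mem (hVr b ha) (hVr (J b') ha)) (hVl (J a') hb))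
      (hVr b' ha')
  · exact Submodule.add_mem _ (Submodule.mem_map_of_mem (hVl (J a') hb'))
      (Submodule.mem_map_of_mem (hVr (J b') ha'))
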